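/- Let N be a positive integer and let H₁, H₂ ∈ M_{2N}(ℂ) be Hermitian positive-definite matrices satisfying the bosonic constraint τ₁ Hᵢ* τ₁ = Hᵢ (i = 1, 2). For s ∈ [0,1] define H(s) = (1−s)H₁ + sH₂. Then for every s ∈ [0,1]: (i) H(s) is Hermitian and positive definite; (ii) τ₁ H(s)* τ₁ = H(s); (iii) every matrix V ∈ M_{2N}(ℂ) commuting with both H₁ and H₂ commutes with H(s); and (iv) every matrix V ∈ M_{2N}(ℂ) with V H₁* = H₁ V and V H₂* = H₂ V satisfies V H(s)* = H(s) V. Hence any two gapped stable quadratic bosonic Hamiltonians sharing a group of linear or antilinear Gaussian symmetries are connected by a path of gapped symmetry-preserving quadratic bosonic Hamiltonians (no symmetry-protected topological phases of free bosons). -/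

import Mathlib

open Matrix
open scoped ComplexOrder

/-- `τ₁ = σ₁ ⊗ 1_N`, the 2N×2N matrix with block form [[0, 1],[1, 0]]. -/
noncomputable def tau1 (N : ℕ) : Matrix (Fin N ⊕ Fin N) (Fin N ⊕ Fin N) ℂ :=
  Matrix.fromBlocks 0 1 1 0

private lemma map_real_smul_add (c1 c2 : ℝ)
    (A B : Matrix (Fin N ⊕ Fin N) (Fin N ⊕ Fin N) ℂ) :
    (((c1 : ℂ) • A + (c2 : ℂ) • B)).map (starRingEnd ℂ)
      = (c1 : ℂ) • A.map (starRingEnd ℂ) + (c2 : ℂ) • B.map (starRingEnd ℂ) := by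
  ext i j
  simp [Matrix.map_apply, Matrix.add_apply, Matrix.smul_apply, _root_.map_mul]

/-- No symmetry-protected topological phases of gapped stable free bosons:
the straight-line path between two gapped stable bosonic coefficient matrices
stays Hermitian, positive definite, bosonic, and preserves all shared linear
and antilinear symmetries. -/
theorem no_SPT_phases_free_bosons (N : ℕ) (hN : 0 < N)
    (H1 H2 : Matrix (Fin N ⊕ Fin N) (Fin N ⊕ Fin N) ℂ)
    (h1herm : H1.IsHermitian) (h2herm : H2.IsHermitian)
    (h1pos : H1.PosDef) (h2pos : H2.PosDef)
    (h1b : tau1 N * H1.map (starRingEnd ℂ) * tau1 N = H1)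
    (h2b : tau1 N * H2.map (starRingEnd ℂ) * tau1 N = H2)
    (s : ℝ) (hs : s ∈ Set.Icc (0 : ℝ) 1) :
    (((1 - s : ℝ) : ℂ) • H1 + ((s : ℝ) : ℂ) • H2).IsHermitian ∧
    (((1 - s : ℝ) : ℂ) • H1 + ((s : ℝ) : ℂ) • H2).PosDef ∧
    tau1 N * (((1 - s : ℝ) : ℂ) • H1 + ((s : ℝ) : ℂ) • H2).map (starRingEnd ℂ) * tau1 N
      = ((1 - s : ℝ) : ℂ) • H1 + ((s : ℝ) : ℂ) • H2 ∧
    (∀ V : Matrix (Fin N ⊕ Fin N) (Fin N ⊕ Fin N) ℂ,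
      V * H1 = H1 * V → V * H2 = H2 * V →
      V * (((1 - s : ℝ) : ℂ) • H1 + ((s : ℝ) : ℂ) • H2)
        = (((1 - s : ℝ) : ℂ) • H1 + ((s : ℝ) : ℂ) • H2) * V) ∧
    (∀ V : Matrix (Fin N ⊕ Fin N) (Fin N ⊕ Fin N) ℂ,
      V * H1.map (starRingEnd ℂ) = H1 * V → V * H2.map (starRingEnd ℂ) = H2 * V →
      V * (((1 - s : ℝ) : ℂ) • H1 + ((s : ℝ) : ℂ) • H2).map (starRingEnd ℂ)
        = (((1 - s : ℝ) : ℂ) • H1 + ((s : ℝ) : ℂ) • H2) * V) := by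
  obtain ⟨hs0, hs1⟩ := hs
  have hc1 : (0 : ℝ) ≤ 1 - s := by linarith
  have hherm : (((1 - s : ℝ) : ℂ) • H1 + ((s : ℝ) : ℂ) • H2).IsHermitian := by
    unfold Matrix.IsHermitian at *
    rw [conjTranspose_add, conjTranspose_smul, conjTranspose_smul, h1herm, h2herm]
    simp [Complex.star_def, Complex.conj_ofReal]
  refine ⟨hherm, ?_, ?_, ?_, ?_⟩
  · refine Matrix.PosDef.of_dotProduct_mulVec_pos hherm fun x hx => ?_
    rw [add_mulVec, smul_mulVec, smul_mulVec, dotProduct_add,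
      dotProduct_smul, dotProduct_smul, smul_eq_mul, smul_eq_mul]
    rcases eq_or_lt_of_le hs1 with h | h
    · subst h
      simpa using h2pos.dotProduct_mulVec_pos hx
    · have h1 : (0 : ℂ) < ((1 - s : ℝ) : ℂ) * (star x ⬝ᵥ H1 *ᵥ x) :=
        mul_pos (by exact_mod_cast (by linarith : (0:ℝ) < 1 - s)) (h1pos.dotProduct_mulVec_pos hx)
      have h2 : (0 : ℂ) ≤ ((s : ℝ) : ℂ) * (star x ⬝ᵥ H2 *ᵥ x) :=
        mul_nonneg (by exact_mod_cast hs0) (h2pos.dotProduct_mulVec_pos hx).le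
      exact add_pos_of_pos_of_nonneg h1 h2
  · rw [map_real_smul_add, mul_add, add_mul, Matrix.mul_smul, Matrix.mul_smul,
      Matrix.smul_mul, Matrix.smul_mul, h1b, h2b]
  · intro V hV1 hV2
    rw [mul_add, add_mul, Matrix.mul_smul, Matrix.mul_smul, Matrix.smul_mul,
      Matrix.smul_mul, hV1, hV2]
  · intro V hV1 hV2
    rw [map_real_smul_add, mul_add, add_mul, Matrix.mul_smul, Matrix.mul_smul,
      Matrix.smul_mul, Matrix.smul_mul, hV1, hV2]
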